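/- Let μ ≥ 0, α₂ > μ/2, τ₂ > 0, τ ≥ τ₂, λ > 0, q ∈ (0,1], R_q > 0, and ε ≥ 0. Let L, Q : ℝ^{d₁×d₂} → ℝ be differentiable, with T_L(Θ,Θ′) ≥ α₂‖Θ−Θ′‖_F² − τ₂‖Θ−Θ′‖_*² for all Θ,Θ′, and with Q(Θ) ≥ Q(Θ′) + ⟨⟨∇Q(Θ′), Θ−Θ′⟩⟩ − (μ/2)‖Θ−Θ′‖_F² for all Θ,Θ′. Set Ψ = L + Q + λ‖·‖_*. Let Θ̂ and Θᵗ be matrices such that (a) there exists G ∈ ℝ^{d₁×d₂} with ‖Θ‖_* ≥ ‖Θ̂‖_* + ⟨⟨G, Θ − Θ̂⟩⟩ for all Θ and ⟨⟨∇L(Θ̂) + ∇Q(Θ̂) + λG, Θᵗ − Θ̂⟩⟩ ≥ 0, (b) ‖Θᵗ − Θ̂‖_* ≤ 4√2 λ^{−q/2} R_q^{1/2} ‖Θᵗ − Θ̂‖_F + ε, and (c) λ^q ≥ 256 τ R_q / (2α₂ − μ). Then, writing T̄(Θ̂,Θᵗ) = (L+Q)(Θ̂) − (L+Q)(Θᵗ)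 − ⟨⟨∇L(Θᵗ) + ∇Q(Θᵗ), Θ̂ − Θᵗ⟩⟩, one has T̄(Θ̂,Θᵗ) ≥ −2τε² and Ψ(Θᵗ) − Ψ(Θ̂) ≥ ((2α₂ − μ)/4)‖Θᵗ − Θ̂‖_F² − 2τε². -/

import Mathlib

open Matrix Finset

attribute [local instance] Matrix.frobeniusNormedAddCommGroup Matrix.frobeniusNormedSpace

noncomputable section

variable {d₁ d₂ : ℕ}

/-- Trace inner product `⟨⟨A,B⟩⟩ = trace(AᵀB)`. -/
def tinner (A B : Matrix (Fin d₁) (Fin d₂) ℝ) : ℝ := (Aᵀ * B).trace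

/-- Frobenius norm. -/
def frobNorm (A : Matrix (Fin d₁) (Fin d₂) ℝ) : ℝ := Real.sqrt (∑ i, ∑ j, (A i j) ^ 2)

/-- The (unordered, zero-padded) singular values of `A`: the square roots of the
eigenvalues of `AᵀA`. -/
def svals (A : Matrix (Fin d₁) (Fin d₂) ℝ) : Fin d₂ → ℝ :=
  fun j => Real.sqrt (((show (Aᵀ * A).IsHermitian by
    simpa using Matrix.isHermitian_conjTranspose_mul_self A)).eigenvalues j)

/-- Nuclear norm: sum of singular values. -/
def nuclearNorm (A : Matrix (Fin d₁) (Fin d₂) ℝ) : ℝ := ∑ j, svals A j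

/-- Operator norm: largest singular value. -/
def opNorm (A : Matrix (Fin d₁) (Fin d₂) ℝ) : ℝ := ⨆ j, svals A j

/-- The `d₁ × d₂` "diagonal" matrix whose diagonal entries are given by `s`. -/
def svdDiag (s : Fin (min d₁ d₂) → ℝ) : Matrix (Fin d₁) (Fin d₂) ℝ :=
  Matrix.of fun i j =>
    if h : (i : ℕ) = (j : ℕ) then
      s ⟨(i : ℕ), by have := i.isLt; have := j.isLt; omega⟩ else 0

/-- `s` is the nonincreasing sequence of singular values of `A`, witnessed by a
singular value decomposition `A = U D Vᵀ` with `U, V` orthogonal. -/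
def IsSVDOf (A : Matrix (Fin d₁) (Fin d₂) ℝ) (s : Fin (min d₁ d₂) → ℝ) : Prop :=
  Antitone s ∧ (∀ j, 0 ≤ s j) ∧
    ∃ (U : Matrix (Fin d₁) (Fin d₁) ℝ) (V : Matrix (Fin d₂) (Fin d₂) ℝ),
      Uᵀ * U = 1 ∧ U * Uᵀ = 1 ∧ Vᵀ * V = 1 ∧ V * Vᵀ = 1 ∧ A = U * svdDiag s * Vᵀ

/-- Assumption 1 of the paper on the univariate regularizer `p = p_λ`,
with concave part `q_λ t = p t - λ * |t|`. -/
structure Assumption1 (p : ℝ → ℝ) (lam μ : ℝ) : Prop where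
  zero : p 0 = 0
  even : ∀ t : ℝ, p (-t) = p t
  slope_anti : AntitoneOn (fun t => p t / t) (Set.Ioi (0 : ℝ))
  diffable : ∀ t : ℝ, t ≠ 0 → DifferentiableAt ℝ p t
  deriv_tendsto : Filter.Tendsto (deriv p) (nhdsWithin 0 (Set.Ioi 0)) (nhds lam)
  mono : MonotoneOn p (Set.Ici (0 : ℝ))
  concave : ConcaveOn ℝ (Set.Ici (0 : ℝ)) p
  weakconv : ∀ t t' : ℝ, 0 < t' → t' < t →
    deriv (fun u => p u - lam * |u|) t - deriv (fun u => p u - lam * |u|) t' ≥ -μ * (t - t')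

/-- The spectral regularizer `P_λ(Θ) = ∑ⱼ p_λ(σⱼ(Θ))`. -/
def Pl (p : ℝ → ℝ) (A : Matrix (Fin d₁) (Fin d₂) ℝ) : ℝ := ∑ j, p (svals A j)

end

section Aux

lemma eig_congr {n : ℕ} {M M' : Matrix (Fin n) (Fin n) ℝ} (h : M = M')
    (h1 : M.IsHermitian) (h2 : M'.IsHermitian) : h1.eigenvalues = h2.eigenvalues := by
  subst h; rfl

lemma svals_neg {d₁ d₂ : ℕ} (A : Matrix (Fin d₁) (Fin d₂) ℝ) : svals (-A) = svals A := by
  funext j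
  unfold svals
  rw [eig_congr (show (-A)ᵀ * (-A) = Aᵀ * A by simp)
    (show ((-A)ᵀ * (-A)).IsHermitian by simpa using Matrix.isHermitian_conjTranspose_mul_self (-A)) (show (Aᵀ * A).IsHermitian by simpa using Matrix.isHermitian_conjTranspose_mul_self A)]

lemma nuclearNorm_neg {d₁ d₂ : ℕ} (A : Matrix (Fin d₁) (Fin d₂) ℝ) :
    nuclearNorm (-A) = nuclearNorm A := by
  unfold nuclearNorm; rw [svals_neg]

lemma nuclearNorm_nonneg {d₁ d₂ : ℕ} (A : Matrix (Fin d₁) (Fin d₂) ℝ) :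
    0 ≤ nuclearNorm A :=
  Finset.sum_nonneg fun j _ => Real.sqrt_nonneg _

lemma frobNorm_neg {d₁ d₂ : ℕ} (A : Matrix (Fin d₁) (Fin d₂) ℝ) :
    frobNorm (-A) = frobNorm A := by
  unfold frobNorm
  congr 1
  refine Finset.sum_congr rfl fun i _ => Finset.sum_congr rfl fun j _ => ?_
  simp

lemma frobNorm_nonneg {d₁ d₂ : ℕ} (A : Matrix (Fin d₁) (Fin d₂) ℝ) :
    0 ≤ frobNorm A := Real.sqrt_nonneg _

lemma tinner_add_left {d₁ d₂ : ℕ} (A B C : Matrix (Fin d₁) (Fin d₂) ℝ) :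
    tinner (A + B) C = tinner A C + tinner B C := by
  simp [tinner, Matrix.transpose_add, Matrix.add_mul]

lemma tinner_smul_left {d₁ d₂ : ℕ} (r : ℝ) (A B : Matrix (Fin d₁) (Fin d₂) ℝ) :
    tinner (r • A) B = r * tinner A B := by
  simp [tinner, Matrix.transpose_smul, Matrix.smul_mul]

lemma tinner_neg_right {d₁ d₂ : ℕ} (A B : Matrix (Fin d₁) (Fin d₂) ℝ) :
    tinner A (-B) = - tinner A B := by
  simp [tinner, Matrix.mul_neg]

end Aux

/-- Inequalities (lem-bound-T1) and (lem-bound-T2) of Lemma 6: lower bounds on the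
modified Taylor error `T̄(Θ̂, Θᵗ)` and on the excess objective `Ψ(Θᵗ) - Ψ(Θ̂)`. -/
theorem taylor_error_and_excess_lower_bounds {d₁ d₂ : ℕ}
    (μ α₂ τ₂ τ lam qq Rq ε : ℝ)
    (hμ : 0 ≤ μ) (hα : μ / 2 < α₂) (hτ₂ : 0 < τ₂) (hττ : τ₂ ≤ τ) (hlam : 0 < lam)
    (hqq0 : 0 < qq) (hqq1 : qq ≤ 1) (hRq : 0 < Rq) (hε : 0 ≤ ε)
    (L Q : Matrix (Fin d₁) (Fin d₂) ℝ → ℝ)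
    (gradL gradQ : Matrix (Fin d₁) (Fin d₂) ℝ → Matrix (Fin d₁) (Fin d₂) ℝ)
    (hdL : Differentiable ℝ L)
    (hgL : ∀ Θ Δ : Matrix (Fin d₁) (Fin d₂) ℝ, fderiv ℝ L Θ Δ = tinner (gradL Θ) Δ)
    (hdQ : Differentiable ℝ Q)
    (hgQ : ∀ Θ Δ : Matrix (Fin d₁) (Fin d₂) ℝ, fderiv ℝ Q Θ Δ = tinner (gradQ Θ) Δ)
    (hRSC : ∀ Θ Θ' : Matrix (Fin d₁) (Fin d₂) ℝ,
      L Θ - L Θ' - tinner (gradL Θ') (Θ - Θ') ≥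
        α₂ * frobNorm (Θ - Θ') ^ 2 - τ₂ * nuclearNorm (Θ - Θ') ^ 2)
    (hQlow : ∀ Θ Θ' : Matrix (Fin d₁) (Fin d₂) ℝ,
      Q Θ ≥ Q Θ' + tinner (gradQ Θ') (Θ - Θ') - μ / 2 * frobNorm (Θ - Θ') ^ 2)
    (Θhat Θt : Matrix (Fin d₁) (Fin d₂) ℝ)
    (ha : ∃ G : Matrix (Fin d₁) (Fin d₂) ℝ,
      (∀ Θ : Matrix (Fin d₁) (Fin d₂) ℝ,
        nuclearNorm Θ ≥ nuclearNorm Θhat + tinner G (Θ - Θhat)) ∧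
      tinner (gradL Θhat + gradQ Θhat + lam • G) (Θt - Θhat) ≥ 0)
    (hb : nuclearNorm (Θt - Θhat) ≤
      4 * Real.sqrt 2 * lam ^ (-(qq / 2)) * Rq ^ ((1 : ℝ) / 2) * frobNorm (Θt - Θhat) + ε)
    (hc : lam ^ qq ≥ 256 * τ * Rq / (2 * α₂ - μ)) :
    (L Θhat + Q Θhat) - (L Θt + Q Θt) - tinner (gradL Θt + gradQ Θt) (Θhat - Θt) ≥
      -2 * τ * ε ^ 2 ∧
    (L Θt + Q Θt + lam * nuclearNorm Θt) - (L Θhat + Q Θhat + lam * nuclearNorm Θhat) ≥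
      (2 * α₂ - μ) / 4 * frobNorm (Θt - Θhat) ^ 2 - 2 * τ * ε ^ 2 := by
  obtain ⟨G, hG1, hG2⟩ := ha
  set F : ℝ := frobNorm (Θt - Θhat) with hF
  set N : ℝ := nuclearNorm (Θt - Θhat) with hN
  have hτpos : 0 < τ := lt_of_lt_of_le hτ₂ hττ
  have hpos : 0 < 2 * α₂ - μ := by linarith
  have hFnn : 0 ≤ F := frobNorm_nonneg _
  have hNnn : 0 ≤ N := nuclearNorm_nonneg _
  set c : ℝ := 4 * Real.sqrt 2 * lam ^ (-(qq / 2)) * Rq ^ ((1 : ℝ) / 2) with hcdef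
  have hlq : (0 : ℝ) < lam ^ qq := Real.rpow_pos_of_pos hlam qq
  -- c² = 32 * (lam^qq)⁻¹ * Rq
  have h2 : Real.sqrt 2 * Real.sqrt 2 = 2 := Real.mul_self_sqrt (by norm_num)
  have hl : lam ^ (-(qq / 2)) * lam ^ (-(qq / 2)) = lam ^ (-qq) := by
    rw [← Real.rpow_add hlam]; ring_nf
  have hr : Rq ^ ((1 : ℝ) / 2) * Rq ^ ((1 : ℝ) / 2) = Rq := by
    rw [← Real.rpow_add hRq]; norm_num
  have hneg : lam ^ (-qq) = (lam ^ qq)⁻¹ := Real.rpow_neg hlam.le qq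
  have c2val : c ^ 2 = 32 * (lam ^ qq)⁻¹ * Rq := by
    have e : c ^ 2 = 16 * (Real.sqrt 2 * Real.sqrt 2) *
        (lam ^ (-(qq / 2)) * lam ^ (-(qq / 2))) * (Rq ^ ((1 : ℝ) / 2) * Rq ^ ((1 : ℝ) / 2)) := by
      ring
    rw [e, h2, hl, hr, hneg]; ring
  -- 64 τ Rq / λ^q ≤ (2α₂ - μ)/4
  have h256 : 256 * τ * Rq ≤ lam ^ qq * (2 * α₂ - μ) := by
    rw [ge_iff_le, div_le_iff₀ hpos] at hc
    linarith
  have key64 : 64 * τ * (lam ^ qq)⁻¹ * Rq ≤ (2 * α₂ - μ) / 4 := by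
    have : (64 * τ * Rq) / (lam ^ qq) ≤ (2 * α₂ - μ) / 4 :=
      (div_le_iff₀ hlq).mpr (by linarith)
    calc 64 * τ * (lam ^ qq)⁻¹ * Rq = (64 * τ * Rq) / (lam ^ qq) := by ring
      _ ≤ _ := this
  -- key inequality : τ₂ N² ≤ (2α₂-μ)/4 F² + 2τε²
  have hN2 : N ^ 2 ≤ 2 * c ^ 2 * F ^ 2 + 2 * ε ^ 2 := by
    have h1 : N ^ 2 ≤ (c * F + ε) ^ 2 := by nlinarith [hb, hNnn]
    nlinarith [sq_nonneg (c * F - ε)]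
  have key : τ₂ * N ^ 2 ≤ (2 * α₂ - μ) / 4 * F ^ 2 + 2 * τ * ε ^ 2 := by
    have s1 : τ₂ * N ^ 2 ≤ τ * N ^ 2 := mul_le_mul_of_nonneg_right hττ (sq_nonneg N)
    have s2 : τ * N ^ 2 ≤ τ * (2 * c ^ 2 * F ^ 2 + 2 * ε ^ 2) :=
      mul_le_mul_of_nonneg_left hN2 hτpos.le
    have s3 : τ * (2 * c ^ 2 * F ^ 2 + 2 * ε ^ 2) =
        (64 * τ * (lam ^ qq)⁻¹ * Rq) * F ^ 2 + 2 * τ * ε ^ 2 := by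
      rw [c2val]; ring
    have s4 : (64 * τ * (lam ^ qq)⁻¹ * Rq) * F ^ 2 ≤ (2 * α₂ - μ) / 4 * F ^ 2 :=
      mul_le_mul_of_nonneg_right key64 (sq_nonneg F)
    linarith
  clear_value c
  clear_value N
  clear_value F
  -- norms of the reversed difference
  have hFrev : frobNorm (Θhat - Θt) = F := by
    rw [show Θhat - Θt = -(Θt - Θhat) from (neg_sub Θt Θhat).symm, frobNorm_neg]
    exact hF.symm
  have hNrev : nuclearNorm (Θhat - Θt) = N := by
    rw [show Θhat - Θt = -(Θt - Θhat) from (neg_sub Θt Θhat).symm, nuclearNorm_neg]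
    exact hN.symm
  constructor
  · -- first claim
    have hL := hRSC Θhat Θt
    have hQ := hQlow Θhat Θt
    rw [hFrev, hNrev] at hL
    rw [hFrev] at hQ
    rw [tinner_add_left]
    linarith [mul_nonneg hpos.le (sq_nonneg F)]
  · -- second claim
    have hL := hRSC Θt Θhat
    have hQ := hQlow Θt Θhat
    have hGn := hG1 Θt
    rw [← hF, ← hN] at hL
    rw [← hF] at hQ
    rw [tinner_add_left, tinner_add_left, tinner_smul_left] at hG2
    linarith [mul_le_mul_of_nonneg_left hGn (le_of_lt hlam)]
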